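/- Let q be a prime, d ≥ 2, 1 ≤ m ≤ d−1, and λ ∈ (ℤ/qℤ)*. Fix linearly independent vectors a₁,…,a_{d−m} in (ℤ/qℤ)^d. Then the number of m-tuples (b₁,…,b_m) of vectors in (ℤ/qℤ)^d such that det(a₁,…,a_{d−m},b₁,…,b_m) = λ equals q^{dm−1} · ∏_{j=2}^{m} (1 − q^{−j}). -/

import Mathlib

open Matrix Finset

lemma key_prod (Q : ℚ) (hQ : 2 ≤ Q) (m : ℕ) :
    ∏ i ∈ range m, (Q ^ m - Q ^ i) =
      Q ^ (m * m) * ∏ j ∈ Icc 1 m, (1 - Q⁻¹ ^ j) := by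
  have hQ0 : Q ≠ 0 := by linarith
  have h1 : ∀ i ∈ range m, Q ^ m - Q ^ i = Q ^ i * (Q ^ (m - i) - 1) := by
    intro i hi
    rw [mul_sub, mul_one, ← pow_add]
    congr 2
    simp only [mem_range] at hi; omega
  rw [Finset.prod_congr rfl h1, Finset.prod_mul_distrib]
  -- reflect the second product
  have h2 : ∏ i ∈ range m, (Q ^ (m - i) - 1) = ∏ j ∈ Icc 1 m, (Q ^ j - 1) := by
    have := Finset.prod_range_reflect (fun j => Q ^ (j + 1) - 1) m
    have hL : ∏ i ∈ range m, (Q ^ (m - i) - 1)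
        = ∏ j ∈ range m, (Q ^ (j + 1) - 1) := by
      rw [← this]
      refine Finset.prod_congr rfl fun i hi => ?_
      simp only [mem_range] at hi
      congr 2
      omega
    rw [hL]
    rw [← Finset.Ico_add_one_right_eq_Icc, Finset.prod_Ico_eq_prod_range]
    refine Finset.prod_congr (by congr 1) fun i _ => by ring_nf
  rw [h2]
  have h3 : ∀ j ∈ Icc 1 m, Q ^ j - 1 = Q ^ j * (1 - Q⁻¹ ^ j) := by
    intro j _
    rw [mul_sub, mul_one, inv_pow, mul_inv_cancel₀ (pow_ne_zero _ hQ0)]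
  rw [Finset.prod_congr rfl h3, Finset.prod_mul_distrib]
  rw [Finset.prod_pow_eq_pow_sum, Finset.prod_pow_eq_pow_sum]
  have hsum : (∑ i ∈ range m, i) + (∑ j ∈ Icc 1 m, j) = m * m := by
    have g1 := Finset.sum_range_id_mul_two m
    have g2 : (∑ j ∈ Icc 1 m, j) = ∑ i ∈ range (m+1), i := by
      rw [Finset.range_eq_Ico, ← Finset.Ico_add_one_right_eq_Icc]
      rw [Finset.sum_Ico_eq_sum_range, Finset.sum_Ico_eq_sum_range]
      simp only [Nat.succ_sub_one, Nat.sub_zero, zero_add]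
      rw [Finset.sum_range_succ']
      simp [add_comm]
    have g3 := Finset.sum_range_id_mul_two (m+1)
    rw [g2]
    rcases m with _ | k
    · simp
    · simp only [Nat.add_sub_cancel] at g1 g3
      nlinarith [g1, g3]
  rw [← hsum, pow_add]; ring

variable {q : ℕ} [Fact (Nat.Prime q)]

lemma det_count_const (m : ℕ) (hm : 1 ≤ m) (u v : ZMod q) (hu : u ≠ 0) (hv : v ≠ 0) :
    (univ.filter (fun A : Matrix (Fin m) (Fin m) (ZMod q) => A.det = u)).card =
      (univ.filter (fun A : Matrix (Fin m) (Fin m) (ZMod q) => A.det = v)).card := by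
  classical
  have i0 : Fin m := ⟨0, hm⟩
  refine Finset.card_bij' (fun A _ => A.updateRow i0 ((v * u⁻¹) • A i0))
    (fun A _ => A.updateRow i0 ((u * v⁻¹) • A i0)) ?_ ?_ ?_ ?_
  · intro A hA
    simp only [mem_filter, mem_univ, true_and] at hA ⊢
    rw [Matrix.det_updateRow_smul, Matrix.updateRow_eq_self, hA]
    field_simp
  · intro A hA
    simp only [mem_filter, mem_univ, true_and] at hA ⊢
    rw [Matrix.det_updateRow_smul, Matrix.updateRow_eq_self, hA]
    field_simp
  · intro A _
    simp only [Matrix.updateRow_self, smul_smul]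
    have : u * v⁻¹ * (v * u⁻¹) = 1 := by field_simp
    rw [this, one_smul]; ext i j; by_cases h : i = i0 <;> simp [Matrix.updateRow_apply, h]
  · intro A _
    simp only [Matrix.updateRow_self, smul_smul]
    have : v * u⁻¹ * (u * v⁻¹) = 1 := by field_simp
    rw [this, one_smul]; ext i j; by_cases h : i = i0 <;> simp [Matrix.updateRow_apply, h]

lemma det_count_mul (m : ℕ) (hm : 1 ≤ m) (u : ZMod q) (hu : u ≠ 0) :
    (univ.filter (fun A : Matrix (Fin m) (Fin m) (ZMod q) => A.det = u)).card * (q - 1)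
      = ∏ i : Fin m, (q ^ m - q ^ (i : ℕ)) := by
  classical
  have hq : q.Prime := Fact.out
  -- the invertible count
  have hGL : (univ.filter (fun A : Matrix (Fin m) (Fin m) (ZMod q) => A.det ≠ 0)).card
      = ∏ i : Fin m, (q ^ m - q ^ (i : ℕ)) := by
    rw [← Fintype.card_subtype]
    have e1 : {A : Matrix (Fin m) (Fin m) (ZMod q) // A.det ≠ 0}
        ≃ {s : Fin m → Fin m → ZMod q // LinearIndependent (ZMod q) s} := by
      refine (Equiv.subtypeEquiv (Matrix.of.symm) ?_)
      intro A
      rw [show LinearIndependent (ZMod q) (Matrix.of.symm A)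
          ↔ LinearIndependent (ZMod q) A.row from Iff.rfl,
        Matrix.linearIndependent_rows_iff_isUnit,
        Matrix.isUnit_iff_isUnit_det, isUnit_iff_ne_zero]
    rw [Fintype.card_congr e1, ← Nat.card_eq_fintype_card]
    have hk : m ≤ Module.finrank (ZMod q) (Fin m → ZMod q) := by
      simp [Module.finrank_fintype_fun_eq_card]
    rw [card_linearIndependent hk]
    simp [Module.finrank_fintype_fun_eq_card, ZMod.card]
  -- fiberwise sum
  have hS := Finset.card_eq_sum_card_fiberwise
    (f := fun A : Matrix (Fin m) (Fin m) (ZMod q) => A.det)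
    (s := univ.filter (fun A : Matrix (Fin m) (Fin m) (ZMod q) => A.det ≠ 0))
    (t := univ.filter (fun v : ZMod q => v ≠ 0))
    (by intro A hA; simpa using hA)
  have hfib : ∀ v ∈ univ.filter (fun v : ZMod q => v ≠ 0),
      ((univ.filter (fun A : Matrix (Fin m) (Fin m) (ZMod q) => A.det ≠ 0)).filter
        (fun A => A.det = v)).card
      = (univ.filter (fun A : Matrix (Fin m) (Fin m) (ZMod q) => A.det = u)).card := by
    intro v hv
    simp only [mem_filter, mem_univ, true_and] at hv
    rw [Finset.filter_filter]
    have hset : (univ.filter (fun A : Matrix (Fin m) (Fin m) (ZMod q) => A.det ≠ 0 ∧ A.det = v))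
        = univ.filter (fun A => A.det = v) := by
      ext A
      simp only [mem_filter, mem_univ, true_and]
      constructor
      · exact And.right
      · intro h; exact ⟨h ▸ hv, h⟩
    rw [hset]
    exact det_count_const m hm v u hv hu
  rw [Finset.sum_congr rfl hfib, Finset.sum_const, smul_eq_mul] at hS
  have hcard : (univ.filter (fun v : ZMod q => v ≠ 0)).card = q - 1 := by
    rw [Finset.filter_ne', Finset.card_erase_of_mem (mem_univ _), Finset.card_univ, ZMod.card]
  rw [hcard] at hS
  rw [mul_comm, ← hS, hGL]


lemma final_numeric (q d m : ℕ) [Fact (Nat.Prime q)] (hq2 : 2 ≤ q) (hd : 2 ≤ d) (hm1 : 1 ≤ m)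
    (hm2 : m ≤ d - 1) (Cd : ℕ)
    (hnat : Cd * (q - 1) = ∏ i : Fin m, (q ^ m - q ^ (i : ℕ))) :
    ((q ^ ((d - m) * m) * Cd : ℕ) : ℚ)
      = (q : ℚ) ^ (d * m - 1) * ∏ j ∈ Finset.Icc 2 m, (1 - ((q : ℚ))⁻¹ ^ j) := by
  have hQ2 : (2 : ℚ) ≤ (q : ℚ) := by exact_mod_cast hq2
  have hQ0 : (q : ℚ) ≠ 0 := by linarith
  have hQ1 : (q : ℚ) - 1 ≠ 0 := by intro h; nlinarith
  have hnm : (d - m) + m = d := by omega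
  have hnatQ : (Cd : ℚ) * ((q : ℚ) - 1) = ∏ i ∈ range m, ((q : ℚ) ^ m - (q : ℚ) ^ i) := by
    have h0 : ((Cd * (q - 1) : ℕ) : ℚ) = (Cd : ℚ) * ((q : ℚ) - 1) := by
      rw [Nat.cast_mul, Nat.cast_sub (by omega : 1 ≤ q), Nat.cast_one]
    rw [← h0, hnat, Nat.cast_prod,
      Fin.prod_univ_eq_prod_range (fun i => ((q ^ m - q ^ i : ℕ) : ℚ)) m]
    refine Finset.prod_congr rfl fun i hi => ?_
    simp only [mem_range] at hi
    rw [Nat.cast_sub (Nat.pow_le_pow_right (by omega) (by omega)), Nat.cast_pow, Nat.cast_pow]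
  have hkey := key_prod (q : ℚ) hQ2 m
  have hsplit : ∏ j ∈ Icc 1 m, (1 - ((q : ℚ))⁻¹ ^ j)
      = (1 - ((q : ℚ))⁻¹) * ∏ j ∈ Icc 2 m, (1 - ((q : ℚ))⁻¹ ^ j) := by
    have h1 : Icc 1 m = insert 1 (Icc 2 m) := by
      ext x
      simp only [mem_Icc, mem_insert]
      omega
    rw [h1, Finset.prod_insert (by simp), pow_one]
  have hexp : (d - m) * m + m * m = d * m := by rw [← add_mul, hnm]
  have hdm1 : 1 ≤ d * m := Nat.one_le_iff_ne_zero.mpr (by positivity)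
  have e1 : (q : ℚ) ^ ((d - m) * m) * (q : ℚ) ^ (m * m) = (q : ℚ) ^ (d * m - 1) * (q : ℚ) := by
    rw [← pow_add, hexp, ← pow_succ]
    congr 1
    omega
  have hQQ : (q : ℚ) * (1 - ((q : ℚ))⁻¹) = (q : ℚ) - 1 := by
    field_simp
  push_cast
  apply mul_right_cancel₀ hQ1
  calc (q : ℚ) ^ ((d - m) * m) * (Cd : ℚ) * ((q : ℚ) - 1)
      = (q : ℚ) ^ ((d - m) * m) * ((Cd : ℚ) * ((q : ℚ) - 1)) := by ring
    _ = (q : ℚ) ^ ((d - m) * m) * ((q : ℚ) ^ (m * m) *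
          ((1 - ((q : ℚ))⁻¹) * ∏ j ∈ Icc 2 m, (1 - ((q : ℚ))⁻¹ ^ j))) := by
        rw [hnatQ, hkey, hsplit]
    _ = ((q : ℚ) ^ ((d - m) * m) * (q : ℚ) ^ (m * m)) *
          ((1 - ((q : ℚ))⁻¹) * ∏ j ∈ Icc 2 m, (1 - ((q : ℚ))⁻¹ ^ j)) := by ring
    _ = ((q : ℚ) ^ (d * m - 1) * (q : ℚ)) *
          ((1 - ((q : ℚ))⁻¹) * ∏ j ∈ Icc 2 m, (1 - ((q : ℚ))⁻¹ ^ j)) := by rw [e1]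
    _ = ((q : ℚ) ^ (d * m - 1) * ∏ j ∈ Icc 2 m, (1 - ((q : ℚ))⁻¹ ^ j)) *
          ((q : ℚ) * (1 - ((q : ℚ))⁻¹)) := by ring
    _ = (q : ℚ) ^ (d * m - 1) * (∏ j ∈ Icc 2 m, (1 - ((q : ℚ))⁻¹ ^ j)) * ((q : ℚ) - 1) := by
        rw [hQQ]

theorem stmt3 (q : ℕ) [Fact (Nat.Prime q)] (d m : ℕ) (hd : 2 ≤ d) (hm1 : 1 ≤ m)
    (hm2 : m ≤ d - 1) (lam : ZMod q) (hlam : IsUnit lam)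
    (a : Fin (d - m) → Fin d → ZMod q) (ha : LinearIndependent (ZMod q) a) :
    ((Finset.univ.filter (fun b : Fin m → Fin d → ZMod q =>
        Matrix.det (Matrix.of fun i (j : Fin d) =>
          if h : (j : ℕ) < d - m then a ⟨j, h⟩ i
          else b ⟨(j : ℕ) - (d - m), by have := j.isLt; omega⟩ i) = lam)).card : ℚ)
      = (q : ℚ) ^ (d * m - 1) * ∏ j ∈ Finset.Icc 2 m, (1 - ((q : ℚ))⁻¹ ^ j) := by
  classical
  have hq : q.Prime := Fact.out
  have hq2 : 2 ≤ q := hq.two_le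
  have hlam0 : lam ≠ 0 := hlam.ne_zero
  have hnm : (d - m) + m = d := by omega
  -- extend a to a basis
  haveI : Fintype (Module.Basis.sumExtendIndex ha) := Fintype.ofFinite _
  set B0 := Module.Basis.sumExtend ha with hB0def
  have hB0 : ∀ i, B0 (Sum.inl i) = a i := by
    intro i
    simp only [hB0def, Module.Basis.sumExtend, Module.Basis.reindex_apply, Equiv.symm_symm, Trans.trans,
      Equiv.trans_apply, Equiv.sumCongr_apply, Equiv.coe_refl, Sum.map_inl,
      Equiv.Set.sumDiffSubset_apply_inl, Module.Basis.extend_apply_self]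
    rfl
  have hcard : Fintype.card (Module.Basis.sumExtendIndex ha) = m := by
    have h1 : Fintype.card (Fin (d - m) ⊕ (Module.Basis.sumExtendIndex ha)) = d := by
      rw [← Module.finrank_eq_card_basis B0]
      simp [Module.finrank_fintype_fun_eq_card]
    simp only [Fintype.card_sum, Fintype.card_fin] at h1
    omega
  set C := B0.reindex (Equiv.sumCongr (Equiv.refl (Fin (d - m)))
    (Fintype.equivFinOfCardEq hcard)) with hCdef
  have hC : ∀ i, C (Sum.inl i) = a i := by
    intro i
    rw [hCdef, Module.Basis.reindex_apply]
    simpa using hB0 i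
  set κ : (Fin (d - m) ⊕ Fin m) ≃ Fin d := finSumFinEquiv.trans (finCongr hnm) with hκdef
  have hκl : ∀ j : Fin (d - m), ((κ (Sum.inl j)) : ℕ) = (j : ℕ) := by
    intro j; simp [hκdef]
  have hκr : ∀ l : Fin m, ((κ (Sum.inr l)) : ℕ) = (d - m) + (l : ℕ) := by
    intro l; simp [hκdef]
  set P := Pi.basisFun (ZMod q) (Fin d) with hPdef
  set u : ZMod q := (P.toMatrix ⇑(C.reindex κ)).det with hudef
  have hu : u ≠ 0 := by
    have := P.isUnit_det (C.reindex κ)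
    rw [Module.Basis.det_apply] at this
    exact this.ne_zero
  -- the key determinant formula
  have hdet : ∀ b : Fin m → Fin d → ZMod q,
      Matrix.det (Matrix.of fun i (j : Fin d) =>
          if h : (j : ℕ) < d - m then a ⟨j, h⟩ i
          else b ⟨(j : ℕ) - (d - m), by have := j.isLt; omega⟩ i)
        = u * (Matrix.of fun k l : Fin m => C.repr (b l) (Sum.inr k)).det := by
    intro b
    set vb : Fin d → (Fin d → ZMod q) := fun j i =>
      if h : (j : ℕ) < d - m then a ⟨j, h⟩ i
      else b ⟨(j : ℕ) - (d - m), by have := j.isLt; omega⟩ i with hvb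
    have hMb : (Matrix.of fun i (j : Fin d) =>
        if h : (j : ℕ) < d - m then a ⟨j, h⟩ i
        else b ⟨(j : ℕ) - (d - m), by have := j.isLt; omega⟩ i) = P.toMatrix vb := by
      ext i j
      rw [Module.Basis.toMatrix_apply]
      simp [hPdef, hvb]
    rw [hMb]
    have hmul : P.toMatrix ⇑(C.reindex κ) * (C.reindex κ).toMatrix vb = P.toMatrix vb :=
      Module.Basis.toMatrix_mul_toMatrix (b := P) (b' := C.reindex κ) vb
    rw [← hmul, Matrix.det_mul, ← hudef]
    congr 1
    have hvl : ∀ j : Fin (d - m), vb (κ (Sum.inl j)) = a j := by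
      intro j
      have hlt : ((κ (Sum.inl j)) : ℕ) < d - m := by rw [hκl]; exact j.isLt
      funext i
      show (if h : ((κ (Sum.inl j)) : ℕ) < d - m then a ⟨κ (Sum.inl j), h⟩ i
        else b ⟨((κ (Sum.inl j)) : ℕ) - (d - m), by omega⟩ i) = a j i
      rw [dif_pos hlt]
      have : (⟨((κ (Sum.inl j)) : ℕ), hlt⟩ : Fin (d - m)) = j := Fin.ext (hκl j)
      rw [this]
    have hvr : ∀ l : Fin m, vb (κ (Sum.inr l)) = b l := by
      intro l
      have hge : ¬ ((κ (Sum.inr l)) : ℕ) < d - m := by rw [hκr]; omega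
      funext i
      show (if h : ((κ (Sum.inr l)) : ℕ) < d - m then a ⟨κ (Sum.inr l), h⟩ i
        else b ⟨((κ (Sum.inr l)) : ℕ) - (d - m), by have := (κ (Sum.inr l)).isLt; omega⟩ i)
        = b l i
      rw [dif_neg hge]
      have : (⟨((κ (Sum.inr l)) : ℕ) - (d - m), by have := (κ (Sum.inr l)).isLt; omega⟩ : Fin m)
          = l := by
        apply Fin.ext
        simp only [hκr]
        omega
      rw [this]
    have hsub : ((C.reindex κ).toMatrix vb).submatrix κ κ
        = Matrix.fromBlocks 1 (Matrix.of fun (i : Fin (d - m)) (l : Fin m) =>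
            C.repr (b l) (Sum.inl i)) 0
            (Matrix.of fun k l : Fin m => C.repr (b l) (Sum.inr k)) := by
      ext x y
      have hent : ∀ x y, ((C.reindex κ).toMatrix vb).submatrix κ κ x y
          = C.repr (vb (κ y)) x := by
        intro x y
        rw [Matrix.submatrix_apply, Module.Basis.toMatrix_apply, Module.Basis.repr_reindex_apply,
          Equiv.symm_apply_apply]
      rcases x with i | k <;> rcases y with j | l
      · rw [hent, hvl j, show a j = C (Sum.inl j) from (hC j).symm, Module.Basis.repr_self]
        rw [Matrix.fromBlocks_apply₁₁, Finsupp.single_apply, Matrix.one_apply]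
        simp [eq_comm]
      · rw [hent, hvr l, Matrix.fromBlocks_apply₁₂, Matrix.of_apply]
      · rw [hent, hvl j, show a j = C (Sum.inl j) from (hC j).symm, Module.Basis.repr_self]
        rw [Matrix.fromBlocks_apply₂₁, Finsupp.single_apply]
        simp
      · rw [hent, hvr l, Matrix.fromBlocks_apply₂₂, Matrix.of_apply]
    rw [← Matrix.det_submatrix_equiv_self κ, hsub, Matrix.det_fromBlocks_zero₂₁,
      Matrix.det_one, one_mul]
  -- rewrite the filter
  have hfilter : (Finset.univ.filter (fun b : Fin m → Fin d → ZMod q =>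
        Matrix.det (Matrix.of fun i (j : Fin d) =>
          if h : (j : ℕ) < d - m then a ⟨j, h⟩ i
          else b ⟨(j : ℕ) - (d - m), by have := j.isLt; omega⟩ i) = lam))
      = (Finset.univ.filter (fun b : Fin m → Fin d → ZMod q =>
          (Matrix.of fun k l : Fin m => C.repr (b l) (Sum.inr k)).det = u⁻¹ * lam)) := by
    apply Finset.filter_congr
    intro b _
    rw [hdet b]
    constructor
    · intro h; rw [← h]; field_simp
    · intro h; rw [h]; field_simp
  rw [hfilter]
  -- counting step
  have hcount : (Finset.univ.filter (fun b : Fin m → Fin d → ZMod q =>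
          (Matrix.of fun k l : Fin m => C.repr (b l) (Sum.inr k)).det = u⁻¹ * lam)).card
      = q ^ ((d - m) * m) *
        (Finset.univ.filter (fun A : Matrix (Fin m) (Fin m) (ZMod q) =>
          A.det = u⁻¹ * lam)).card := by
    let E1 : (Fin m → Fin d → ZMod q) ≃ (Fin m → (Fin (d - m) ⊕ Fin m) → ZMod q) :=
      Equiv.piCongrRight (fun _ => C.equivFun.toEquiv)
    let E2 : (Fin m → (Fin (d - m) ⊕ Fin m) → ZMod q)
        ≃ (Fin m → (Fin (d - m) → ZMod q) × (Fin m → ZMod q)) :=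
      Equiv.piCongrRight (fun _ => Equiv.sumArrowEquivProdArrow _ _ _)
    let E3 : (Fin m → (Fin (d - m) → ZMod q) × (Fin m → ZMod q))
        ≃ ((Fin m → Fin (d - m) → ZMod q) × (Fin m → Fin m → ZMod q)) :=
      Equiv.arrowProdEquivProdArrow _ _ _
    let E := E1.trans (E2.trans E3)
    have hE : ∀ (b : Fin m → Fin d → ZMod q) (l k : Fin m),
        (E b).2 l k = C.repr (b l) (Sum.inr k) := by
      intro b l k
      simp [E, E1, E2, E3, Equiv.arrowProdEquivProdArrow, Equiv.sumArrowEquivProdArrow,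
        Module.Basis.equivFun_apply]
    have hiff : ∀ b : Fin m → Fin d → ZMod q,
        ((Matrix.of fun k l : Fin m => C.repr (b l) (Sum.inr k)).det = (u⁻¹ * lam))
        ↔ ((Matrix.of fun k l : Fin m => (E b).2 l k).det = (u⁻¹ * lam)) := by
      intro b
      have : (Matrix.of fun k l : Fin m => (E b).2 l k)
          = (Matrix.of fun k l : Fin m => C.repr (b l) (Sum.inr k)) := by
        ext k l; rw [Matrix.of_apply, Matrix.of_apply, hE]
      rw [this]
    have h1 : (univ.filter (fun b : Fin m → Fin d → ZMod q =>
        (Matrix.of fun k l : Fin m => C.repr (b l) (Sum.inr k)).det = (u⁻¹ * lam))).card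
        = Fintype.card {b : Fin m → Fin d → ZMod q //
            (Matrix.of fun k l : Fin m => C.repr (b l) (Sum.inr k)).det = (u⁻¹ * lam)} :=
      (Fintype.card_subtype _).symm
    let E4 : {c : (Fin m → Fin (d - m) → ZMod q) × (Fin m → Fin m → ZMod q) //
        (Matrix.of fun k l : Fin m => c.2 l k).det = (u⁻¹ * lam)}
        ≃ ((Fin m → Fin (d - m) → ZMod q) ×
          {y : Fin m → Fin m → ZMod q // (Matrix.of fun k l : Fin m => y l k).det = (u⁻¹ * lam)}) :=
      { toFun := fun c => (c.1.1, ⟨c.1.2, c.2⟩)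
        invFun := fun c => ⟨(c.1, c.2.1), c.2.2⟩
        left_inv := fun c => rfl
        right_inv := fun c => rfl }
    let E5 : {y : Fin m → Fin m → ZMod q // (Matrix.of fun k l : Fin m => y l k).det = (u⁻¹ * lam)}
        ≃ {A : Matrix (Fin m) (Fin m) (ZMod q) // A.det = (u⁻¹ * lam)} :=
      Matrix.of.subtypeEquiv (fun y => by
        rw [show (Matrix.of fun k l : Fin m => y l k) = (Matrix.of y)ᵀ from rfl,
          Matrix.det_transpose])
    rw [h1, Fintype.card_congr ((E.subtypeEquiv hiff).trans (E4.trans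
      (Equiv.prodCongrRight (fun _ => E5)))), Fintype.card_prod, Fintype.card_subtype]
    congr 1
    rw [Fintype.card_fun, Fintype.card_fun, Fintype.card_fin, Fintype.card_fin, ZMod.card,
      ← pow_mul, mul_comm]
  rw [hcount]
  have hmu : u⁻¹ * lam ≠ 0 := by
    simp only [ne_eq, mul_eq_zero, inv_eq_zero, not_or]
    exact ⟨hu, hlam0⟩
  exact final_numeric q d m hq2 hd hm1 hm2 _ (det_count_mul m hm1 (u⁻¹ * lam) hmu)
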